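/- Let 𝒜₁, 𝒜₂ and 𝖡 be abelian categories and 𝖱 : 𝒜₁ × 𝒜₂ → 𝖡 a functor additive in each variable such that 𝖱(−, N) is right exact for every object N of 𝒜₂. Assume 𝒜₂ admits a generating class 𝖴 (every object of 𝒜₂ is an epimorphic image of some member of 𝖴) such that 𝖱(−, U) is exact for every U ∈ 𝖴. Let 0 → X → Y → Z → 0 be a short exact sequence in 𝒜₁ such that 𝖱(X, −) and 𝖱(Y, −) are right exact and 𝖱(Z, −) is exact. Then for every object N of 𝒜₂ the sequence 0 → 𝖱(X, N) → 𝖱(Y, N) → 𝖱(Z, N) → 0 is exact in 𝖡. -/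

import Mathlib

open CategoryTheory CategoryTheory.Limits

universe v₁ v₂ v₃ u₁ u₂ u₃

open CategoryTheory.Abelian Pseudoelement in
/-- **Statement 9.** Let `𝒜₁, 𝒜₂, ℬ` be abelian categories and `R : 𝒜₁ × 𝒜₂ → ℬ` a
functor additive in each variable such that `R(-, N)` is right exact for all `N`.
Assume `𝒜₂` has a generating class `𝒰` with `R(-, U)` exact for `U ∈ 𝒰`.  If
`0 → X → Y → Z → 0` is exact in `𝒜₁` with `R(X, -)`, `R(Y, -)` right exact and
`R(Z, -)` exact, then `0 → R(X,N) → R(Y,N) → R(Z,N) → 0` is exact for every `N`. -/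
theorem statement9 {𝒜₁ : Type u₁} {𝒜₂ : Type u₂} {ℬ : Type u₃}
    [Category.{v₁} 𝒜₁] [Category.{v₂} 𝒜₂] [Category.{v₃} ℬ]
    [Abelian 𝒜₁] [Abelian 𝒜₂] [Abelian ℬ]
    (F : 𝒜₁ ⥤ 𝒜₂ ⥤ ℬ)
    [∀ X : 𝒜₁, (F.obj X).Additive] [∀ N : 𝒜₂, (F.flip.obj N).Additive]
    (hRE : ∀ (N : 𝒜₂) (S' : ShortComplex 𝒜₁), S'.ShortExact →
      (S'.map (F.flip.obj N)).Exact ∧ Epi ((F.flip.obj N).map S'.g))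
    (𝒰 : Set 𝒜₂)
    (hgen : ∀ N : 𝒜₂, ∃ U ∈ 𝒰, ∃ p : U ⟶ N, Epi p)
    (hUexact : ∀ U ∈ 𝒰, ∀ S' : ShortComplex 𝒜₁, S'.ShortExact →
      (S'.map (F.flip.obj U)).ShortExact)
    (S : ShortComplex 𝒜₁) (hS : S.ShortExact)
    (hX : ∀ T : ShortComplex 𝒜₂, T.ShortExact →
      (T.map (F.obj S.X₁)).Exact ∧ Epi ((F.obj S.X₁).map T.g))
    (hY : ∀ T : ShortComplex 𝒜₂, T.ShortExact →
      (T.map (F.obj S.X₂)).Exact ∧ Epi ((F.obj S.X₂).map T.g))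
    (hZ : ∀ T : ShortComplex 𝒜₂, T.ShortExact → (T.map (F.obj S.X₃)).ShortExact) :
    ∀ N : 𝒜₂, (S.map (F.flip.obj N)).ShortExact := by
  intro N
  obtain ⟨U, hU, p, hp⟩ := hgen N
  -- the short exact sequence 0 → K → U → N → 0 in 𝒜₂
  set K : 𝒜₂ := kernel p with hK
  let T : ShortComplex 𝒜₂ := ShortComplex.mk (kernel.ι p) p (kernel.condition p)
  have hT : T.ShortExact := by
    haveI : Mono T.f := by dsimp [T]; infer_instance
    haveI : Epi T.g := hp
    exact ⟨ShortComplex.exact_of_f_is_kernel _ (kernelIsKernel p)⟩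
  obtain ⟨hexN, hepN⟩ := hRE N S hS
  obtain ⟨hexK, _⟩ := hRE K S hS
  have hrowU := hUexact U hU S hS
  have hcolX := hX T hT
  have hcolY := hY T hT
  have hcolZ := hZ T hT
  -- notation for the maps in the 3×3 diagram
  let kX : (F.obj S.X₁).obj K ⟶ (F.obj S.X₁).obj U := (F.obj S.X₁).map (kernel.ι p)
  let pX : (F.obj S.X₁).obj U ⟶ (F.obj S.X₁).obj N := (F.obj S.X₁).map p
  let kY : (F.obj S.X₂).obj K ⟶ (F.obj S.X₂).obj U := (F.obj S.X₂).map (kernel.ι p)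
  let pY : (F.obj S.X₂).obj U ⟶ (F.obj S.X₂).obj N := (F.obj S.X₂).map p
  let kZ : (F.obj S.X₃).obj K ⟶ (F.obj S.X₃).obj U := (F.obj S.X₃).map (kernel.ι p)
  let fK : (F.obj S.X₁).obj K ⟶ (F.obj S.X₂).obj K := (F.map S.f).app K
  let fU : (F.obj S.X₁).obj U ⟶ (F.obj S.X₂).obj U := (F.map S.f).app U
  let fN : (F.obj S.X₁).obj N ⟶ (F.obj S.X₂).obj N := (F.map S.f).app N
  let gK : (F.obj S.X₂).obj K ⟶ (F.obj S.X₃).obj K := (F.map S.g).app K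
  let gU : (F.obj S.X₂).obj U ⟶ (F.obj S.X₃).obj U := (F.map S.g).app U
  haveI hmono : Mono ((F.flip.obj N).map S.f) := by
    show Mono fN
    apply mono_of_zero_of_map_zero
    intro x hx
    -- lift x along the epi pX
    haveI : Epi pX := hcolX.2
    obtain ⟨x', hx'⟩ := pseudo_surjective_of_epi pX x
    -- pY (fU x') = fN (pX x') = 0
    have h1 : pY (fU x') = 0 := by
      rw [← Pseudoelement.comp_apply, ← (F.map S.f).naturality p, Pseudoelement.comp_apply, hx', hx]
    -- column Y exactness gives y with kY y = fU x'
    obtain ⟨y, hy₀⟩ := pseudo_exact_of_exact hcolY.1 (fU x') h1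
    have hy : kY y = fU x' := hy₀
    have nat_g : kY ≫ gU = gK ≫ kZ := (F.map S.g).naturality (kernel.ι p)
    have nat_fk : kX ≫ fU = fK ≫ kY := (F.map S.f).naturality (kernel.ι p)
    -- kZ (gK y) = gU (kY y) = gU (fU x') = 0
    have hfg : fU ≫ gU = 0 := by
      show (F.map S.f).app U ≫ (F.map S.g).app U = 0
      rw [← NatTrans.comp_app, ← F.map_comp, S.zero]
      have : (F.flip.obj U).map (0 : S.X₁ ⟶ S.X₃) = 0 :=
        Functor.map_zero _ _ _
      exact this
    have h2 : kZ (gK y) = 0 := by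
      erw [← Pseudoelement.comp_apply, ← nat_g, Pseudoelement.comp_apply, hy,
        ← Pseudoelement.comp_apply, hfg, Pseudoelement.zero_apply]
    haveI : Mono kZ := (hZ T hT).mono_f
    have h3 : gK y = 0 := by
      apply pseudo_injective_of_mono kZ
      rw [h2, Pseudoelement.apply_zero]
    -- row K exactness gives x'' with fK x'' = y
    obtain ⟨x'', hx''₀⟩ := pseudo_exact_of_exact hexK y h3
    have hx'' : fK x'' = y := hx''₀
    -- fU (kX x'') = kY (fK x'') = kY y = fU x'
    have h4 : fU (kX x'') = fU x' := by
      erw [← Pseudoelement.comp_apply, nat_fk, Pseudoelement.comp_apply, hx'', hy]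
    haveI : Mono fU := hrowU.mono_f
    have h5 : kX x'' = x' := pseudo_injective_of_mono fU h4
    -- hence x = pX x' = (kX ≫ pX) x'' = 0
    have h6 : kX ≫ pX = 0 := by
      show (F.obj S.X₁).map (kernel.ι p) ≫ (F.obj S.X₁).map p = 0
      rw [← Functor.map_comp, kernel.condition, Functor.map_zero]
    erw [← hx', ← h5, ← Pseudoelement.comp_apply, h6, Pseudoelement.zero_apply]
  haveI : Mono ((S.map (F.flip.obj N)).f) := hmono
  haveI : Epi ((S.map (F.flip.obj N)).g) := hepN
  exact ⟨hexN⟩
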